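/- Let n, d ≥ 1 be integers and let w_1, …, w_n ∈ ℝ^d be vectors all of whose coordinates are nonnegative. Then ∑_{u=1}^n ∑_{v=1}^n ⟨w_u, w_v⟩ ≥ (1/d) · ∑_{u=1}^n ∑_{v=1}^n ‖w_u‖·‖w_v‖, where ⟨·,·⟩ is the standard inner product on ℝ^d and ‖·‖ the Euclidean norm. -/

import Mathlib

open scoped RealInnerProductSpace

/-- Let `n, d ≥ 1` and let `w_1, …, w_n ∈ ℝ^d` have nonnegative
coordinates. Then `∑_u ∑_v ⟨w_u, w_v⟩ ≥ (1/d)·∑_u ∑_v ‖w_u‖·‖w_v‖` for the standard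
inner product and Euclidean norm on `ℝ^d`. -/
theorem sum_inner_ge_inv_dim_mul_sum_norm
    (n d : ℕ) (hn : 1 ≤ n) (hd : 1 ≤ d)
    (w : Fin n → EuclideanSpace ℝ (Fin d)) (hw : ∀ u k, 0 ≤ w u k) :
    (1 / (d : ℝ)) * ∑ u, ∑ v, ‖w u‖ * ‖w v‖ ≤ ∑ u, ∑ v, ⟪w u, w v⟫ := by
  set S : EuclideanSpace ℝ (Fin d) := ∑ u, w u with hS
  have hinner : ∑ u, ∑ v, ⟪w u, w v⟫ = ‖S‖ ^ 2 := by
    rw [← real_inner_self_eq_norm_sq, hS, sum_inner]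
    exact Finset.sum_congr rfl fun u _ => by rw [inner_sum]
  have hnorm : ∑ u, ∑ v, ‖w u‖ * ‖w v‖ = (∑ u, ‖w u‖) ^ 2 := by
    rw [sq, Finset.sum_mul_sum]
  -- step 1: ‖w u‖ ≤ ∑ k, w u k
  have h1 : ∀ u, ‖w u‖ ≤ ∑ k, w u k := by
    intro u
    rw [EuclideanSpace.norm_eq]
    rw [show (∑ k, w u k) = Real.sqrt ((∑ k, w u k) ^ 2) from
      (Real.sqrt_sq (Finset.sum_nonneg fun k _ => hw u k)).symm]
    apply Real.sqrt_le_sqrt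
    simp only [Real.norm_eq_abs, sq_abs]
    exact Finset.sum_sq_le_sq_sum_of_nonneg fun k _ => hw u k
  have hSapp : ∀ k, S k = ∑ u, w u k := by
    intro k
    rw [hS]
    rw [WithLp.ofLp_sum]
    exact Fintype.sum_apply k (fun u => (w u).ofLp)
  have hSnonneg : ∀ k, 0 ≤ S k := fun k => by
    rw [hSapp]; exact Finset.sum_nonneg fun u _ => hw u k
  have h2 : ∑ u, ‖w u‖ ≤ ∑ k, S k := by
    calc ∑ u, ‖w u‖ ≤ ∑ u, ∑ k, w u k := Finset.sum_le_sum fun u _ => h1 u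
      _ = ∑ k, S k := by rw [Finset.sum_comm]; exact Finset.sum_congr rfl fun k _ => (hSapp k).symm
  -- step 2: (∑ k, S k)^2 ≤ d * ∑ k, (S k)^2 = d * ‖S‖^2
  have h3 : (∑ k, S k) ^ 2 ≤ (d : ℝ) * ‖S‖ ^ 2 := by
    have := sq_sum_le_card_mul_sum_sq (s := (Finset.univ : Finset (Fin d))) (f := fun k => S k)
    simp only [Finset.card_univ, Fintype.card_fin] at this
    calc (∑ k, S k) ^ 2 ≤ (d : ℝ) * ∑ k, S k ^ 2 := this
      _ = (d : ℝ) * ‖S‖ ^ 2 := by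
          rw [EuclideanSpace.norm_eq, Real.sq_sqrt (Finset.sum_nonneg fun k _ => sq_nonneg _)]
          simp [sq_abs]
  have h4 : (∑ u, ‖w u‖) ^ 2 ≤ (d : ℝ) * ‖S‖ ^ 2 := by
    refine le_trans ?_ h3
    apply pow_le_pow_left₀ (Finset.sum_nonneg fun u _ => norm_nonneg _) h2
  rw [hinner, hnorm]
  have hd' : (0 : ℝ) < d := by exact_mod_cast hd
  rw [div_mul_eq_mul_div, one_mul, div_le_iff₀ hd']
  linarith [h4]
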